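/- Let 0 < a < s, let x = (a cos θ, a sin θ) and y = (s cos θ_y, s sin θ_y) be points of ℝ². Then the series Σ_{m=1}^∞ (1/m)(a/s)^m cos m(θ − θ_y) converges and log|x − y| = log s − Σ_{m=1}^∞ (1/m)(a/s)^m cos m(θ − θ_y). -/

import Mathlib

/-- Let `0 < a < s`, `x = (a cos θ, a sin θ)`, `y = (s cos θ_y, s sin θ_y)` in `ℝ²`.
Then `Σ_{m=1}^∞ (1/m)(a/s)^m cos m(θ - θ_y)` converges and
`log ‖x - y‖ = log s - Σ_{m=1}^∞ (1/m)(a/s)^m cos m(θ - θ_y)`. -/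
theorem log_dist_expansion_inner_circle (a s θ θy : ℝ) (ha : 0 < a) (has : a < s)
    (x y : EuclideanSpace ℝ (Fin 2))
    (hx : x = ![a * Real.cos θ, a * Real.sin θ])
    (hy : y = ![s * Real.cos θy, s * Real.sin θy]) :
    HasSum (fun m : ℕ => (1 / (m + 1 : ℝ)) * (a / s) ^ (m + 1) * Real.cos ((m + 1) * (θ - θy)))
      (Real.log s - Real.log ‖x - y‖) := by
  have hs : (0:ℝ) < s := ha.trans has
  set φ : ℝ := θ - θy with hφ
  set r : ℝ := a / s with hr
  have hr0 : 0 < r := div_pos ha hs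
  have hr1 : r < 1 := (div_lt_one hs).mpr has
  set z : ℂ := (r : ℂ) * Complex.exp (φ * Complex.I) with hzdef
  have hznorm : ‖z‖ < 1 := by
    rw [hzdef, norm_mul, Complex.norm_exp]
    simp [abs_of_pos hr0, hr1]
  have hrs : r * s = a := div_mul_cancel₀ a hs.ne'
  -- key distance identity
  have hdist : ‖x - y‖ = s * ‖1 - z‖ := by
    have h1 : ‖x - y‖ = Real.sqrt ((a * Real.cos θ - s * Real.cos θy)^2
        + (a * Real.sin θ - s * Real.sin θy)^2) := by
      rw [EuclideanSpace.norm_eq]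
      congr 1
      rw [Fin.sum_univ_two]
      simp [hx, hy, Real.norm_eq_abs, _root_.sq_abs]
    have h2 : s * ‖1 - z‖ = Real.sqrt ((s - a * Real.cos φ)^2
        + (a * Real.sin φ)^2) := by
      have : (s : ℂ) * (1 - z) = (s : ℂ) - (a : ℂ) * Complex.exp (φ * Complex.I) := by
        have hsC : (s:ℂ) ≠ 0 := by exact_mod_cast hs.ne'
        rw [hzdef]
        push_cast [hr]
        field_simp
      calc s * ‖1 - z‖ = ‖(s:ℂ) * (1 - z)‖ := by
            rw [norm_mul, Complex.norm_of_nonneg hs.le]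
        _ = ‖(s : ℂ) - (a : ℂ) * Complex.exp (φ * Complex.I)‖ := by rw [this]
        _ = Real.sqrt ((s - a * Real.cos φ)^2 + (a * Real.sin φ)^2) := by
            rw [Complex.norm_def, Complex.normSq_apply]
            congr 1
            simp [Complex.exp_ofReal_mul_I_re, Complex.exp_ofReal_mul_I_im]
            ring
    rw [h1, h2]
    congr 1
    rw [hφ, Real.cos_sub, Real.sin_sub]
    linear_combination (s^2 - a^2*(Real.sin θ^2 + Real.cos θ^2)) * Real.sin_sq_add_cos_sq θy
  have h1z : (1 : ℂ) - z ≠ 0 := by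
    refine sub_ne_zero.mpr (fun h => ?_)
    rw [← h] at hznorm
    norm_num at hznorm
  have H := Complex.hasSum_taylorSeries_neg_log hznorm
  have Hre := Complex.reCLM.hasSum H
  have Hshift : HasSum (fun m : ℕ => Complex.reCLM (z ^ (m + 1) / (m + 1 : ℕ)))
      ((-Complex.log (1 - z)).re) :=
    (hasSum_nat_add_iff (f := fun n : ℕ => Complex.reCLM (z ^ n / n)) 1).mpr (by simpa using Hre)
  have hterm : (fun m : ℕ => (1 / (m + 1 : ℝ)) * r ^ (m + 1) * Real.cos ((m + 1) * φ))
      = fun m : ℕ => Complex.reCLM (z ^ (m + 1) / (m + 1 : ℕ)) := by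
    funext m
    have hz : z ^ (m + 1) / ((m + 1 : ℕ) : ℂ)
        = ((r ^ (m+1) / (m+1) : ℝ) : ℂ) * Complex.exp ((((m:ℝ)+1) * φ : ℝ) * Complex.I) := by
      rw [hzdef, mul_pow, ← Complex.exp_nat_mul]
      push_cast
      ring
    simp only [Complex.reCLM_apply, hz, Complex.re_ofReal_mul, Complex.exp_ofReal_mul_I_re]
    ring
  have hval : (-Complex.log (1 - z)).re = Real.log s - Real.log ‖x - y‖ := by
    rw [Complex.neg_re, Complex.log_re, hdist,
      Real.log_mul hs.ne' (norm_ne_zero_iff.mpr h1z)]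
    ring
  rw [show (fun m : ℕ => (1 / (m + 1 : ℝ)) * r ^ (m + 1) * Real.cos ((m + 1) * φ)) = _ from hterm,
    ← hval]
  exact Hshift
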